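/- Let S be an n-simplex with faces S^i, C^i closed convex subsets of S with S^i ⊆ C^i, and C^i_t = (1-t)S^i + tC^i. If for some t ∈ [0,1) the family {C^i_t : i} does not cover S, then there is a neighborhood W of t in [0,1] such that {C^i_{t'} : i} does not cover S for all t' ∈ W. -/

import Mathlib

theorem stmt_11 (n : ℕ) (a : Fin (n + 1) → EuclideanSpace ℝ (Fin n))
    (ha : AffineIndependent ℝ a)
    (S : Set (EuclideanSpace ℝ (Fin n))) (hS : S = convexHull ℝ (Set.range a))
    (face : Fin (n + 1) → Set (EuclideanSpace ℝ (Fin n)))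
    (hface : ∀ i, face i = convexHull ℝ (a '' {j | j ≠ i}))
    (C : Fin (n + 1) → Set (EuclideanSpace ℝ (Fin n)))
    (hCclosed : ∀ i, IsClosed (C i)) (hCconv : ∀ i, Convex ℝ (C i))
    (hCS : ∀ i, C i ⊆ S) (hfaceC : ∀ i, face i ⊆ C i)
    (Ct : Fin (n + 1) → ℝ → Set (EuclideanSpace ℝ (Fin n)))
    (hCt : ∀ i t, Ct i t = {x | ∃ s ∈ face i, ∃ c ∈ C i, x = (1 - t) • s + t • c})
    (t : ℝ) (ht : t ∈ Set.Ico (0 : ℝ) 1) (hnc : ¬ S ⊆ ⋃ i, Ct i t) :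
    ∃ W ∈ nhdsWithin t (Set.Icc (0 : ℝ) 1), ∀ t' ∈ W, ¬ S ⊆ ⋃ i, Ct i t' := by
  -- S is compact
  have hScomp : IsCompact S := by
    rw [hS]
    exact (Set.finite_range a).isCompact_convexHull (𝕜 := ℝ)
  -- each face is compact
  have hfacecomp : ∀ i, IsCompact (face i) := by
    intro i
    rw [hface]
    exact ((Set.finite_range a).subset (Set.image_subset_range _ _)).isCompact_convexHull (𝕜 := ℝ)
  -- each C i is compact
  have hCcomp : ∀ i, IsCompact (C i) :=
    fun i => IsCompact.of_isClosed_subset hScomp (hCclosed i) (hCS i)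
  -- each Ct i t is compact
  have hCtcomp : ∀ i, IsCompact (Ct i t) := by
    intro i
    have himg : Ct i t =
        (fun p : EuclideanSpace ℝ (Fin n) × EuclideanSpace ℝ (Fin n) =>
          (1 - t) • p.1 + t • p.2) '' ((face i) ×ˢ (C i)) := by
      rw [hCt]
      ext x
      constructor
      · rintro ⟨s, hs, c, hc, rfl⟩
        exact ⟨(s, c), ⟨hs, hc⟩, rfl⟩
      · rintro ⟨⟨s, c⟩, ⟨hs, hc⟩, rfl⟩
        exact ⟨s, hs, c, hc, rfl⟩
    rw [himg]
    exact (((hfacecomp i).prod (hCcomp i))).image (by fun_prop)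
  -- the union at time t is closed
  have hKclosed : IsClosed (⋃ i, Ct i t) :=
    isClosed_iUnion_of_finite fun i => (hCtcomp i).isClosed
  -- pick x ∈ S not covered
  rw [Set.not_subset] at hnc
  obtain ⟨x, hxS, hxK⟩ := hnc
  -- x has positive distance to the union
  obtain ⟨ε, hε, hball⟩ := Metric.isOpen_iff.mp hKclosed.isOpen_compl x hxK
  -- bound on S
  obtain ⟨R, hR⟩ := hScomp.isBounded.subset_closedBall 0
  have hR0 : (0 : ℝ) ≤ max R 0 := le_max_right _ _
  have hSnorm : ∀ y ∈ S, ‖y‖ ≤ max R 0 := by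
    intro y hy
    have := hR hy
    simp only [Metric.mem_closedBall, dist_zero_right] at this
    exact this.trans (le_max_left _ _)
  set M : ℝ := max R 0 with hM
  have hden : (0 : ℝ) < 2 * M + 1 := by linarith
  set δ : ℝ := ε / (2 * M + 1) with hδ
  have hδpos : 0 < δ := div_pos hε hden
  refine ⟨Metric.ball t δ, mem_nhdsWithin_of_mem_nhds (Metric.ball_mem_nhds t hδpos), ?_⟩
  intro t' ht' hsub
  have hx' := hsub hxS
  rw [Set.mem_iUnion] at hx'
  obtain ⟨i, hxi⟩ := hx'
  rw [hCt] at hxi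
  obtain ⟨s, hs, c, hc, hxeq⟩ := hxi
  -- the corresponding point at time t
  set y : EuclideanSpace ℝ (Fin n) := (1 - t) • s + t • c with hy
  have hyK : y ∈ ⋃ i, Ct i t := by
    apply Set.mem_iUnion.mpr ⟨i, _⟩
    rw [hCt]
    exact ⟨s, hs, c, hc, rfl⟩
  -- distance estimate
  have hsS : s ∈ S := hCS i (hfaceC i hs)
  have hcS : c ∈ S := hCS i hc
  have hdist : dist y x < ε := by
    have hxy : y - x = (t - t') • (c - s) := by
      rw [hxeq, hy]
      module
    have : ‖y - x‖ ≤ |t - t'| * (2 * M) := by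
      rw [hxy, norm_smul, Real.norm_eq_abs]
      have h1 : ‖c - s‖ ≤ 2 * M := by
        calc ‖c - s‖ ≤ ‖c‖ + ‖s‖ := norm_sub_le _ _
          _ ≤ M + M := add_le_add (hSnorm c hcS) (hSnorm s hsS)
          _ = 2 * M := by ring
      exact mul_le_mul_of_nonneg_left h1 (abs_nonneg _)
    have htt' : |t - t'| < δ := by
      rw [abs_sub_comm]
      exact Metric.mem_ball.mp ht'
    have h2 : |t - t'| * (2 * M) ≤ δ * (2 * M) :=
      mul_le_mul_of_nonneg_right htt'.le (by linarith)
    have h3 : δ * (2 * M) < δ * (2 * M + 1) := by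
      have := mul_lt_mul_of_pos_left (by linarith : (2:ℝ) * M < 2 * M + 1) hδpos
      linarith
    have h4 : δ * (2 * M + 1) = ε := by
      rw [hδ, div_mul_cancel₀ _ hden.ne']
    rw [dist_eq_norm]
    linarith
  exact (hball (Metric.mem_ball.mpr hdist)) hyK
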